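/- If S is an 𝓗-complete Hausdorff topological semilattice containing the discrete semilattice (ℕ, min) as a dense subsemilattice, then the complement S \ ℕ is a singleton {a}, and a satisfies a·a = a and a·n = n for all n ∈ ℕ (i.e., a is the top element of S). -/

import Mathlib

open Topology Set

/-- A filter is free if the intersection of all its members is empty. -/
def FreeF (F : Filter ℕ) : Prop := ⋂₀ F.sets = ∅

/-- The topology on ℕ_ℱ = ℕ ∪ {ℱ} (modelled as `Option ℕ`, with `none` the point ℱ):
all points of ℕ are isolated, and the sets F ∪ {ℱ}, F ∈ ℱ, form a neighbourhood base at ℱ. -/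
def nfTop (F : Filter ℕ) : TopologicalSpace (Option ℕ) where
  IsOpen U := none ∈ U → {n : ℕ | some n ∈ U} ∈ F
  isOpen_univ := fun _ => by simp
  isOpen_inter := fun U V hU hV h => Filter.inter_mem (hU h.1) (hV h.2)
  isOpen_sUnion := fun S hS h => by
    obtain ⟨U, hUS, hnU⟩ := h
    exact Filter.mem_of_superset (hS U hUS hnU) fun n hn => ⟨U, hUS, hn⟩

/-- min on ℕ extended to ℕ_ℱ by min(n,ℱ) = n, min(ℱ,ℱ) = ℱ. -/
def minOp : Option ℕ → Option ℕ → Option ℕ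
  | none, y => y
  | some a, none => some a
  | some a, some b => some (min a b)

/-- max on ℕ extended to ℕ_ℱ by max(n,ℱ) = ℱ = max(ℱ,ℱ). -/
def maxOp : Option ℕ → Option ℕ → Option ℕ
  | none, _ => none
  | _, none => none
  | some a, some b => some (max a b)

/-- `X` with operation `op` is a (Hausdorff) topological semilattice. -/
structure IsTopSemilattice (X : Type*) [TopologicalSpace X] (op : X → X → X) : Prop where
  t2 : T2Space X
  comm : ∀ a b, op a b = op b a
  idem : ∀ a, op a a = a
  assoc : ∀ a b c, op (op a b) c = op a (op b c)
  cont : Continuous fun p : X × X => op p.1 p.2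

/-- 𝓗-completeness: the image under any topological embedding which is a semilattice
homomorphism into a Hausdorff topological semilattice is closed. -/
def HComplete (X : Type*) [TopologicalSpace X] (op : X → X → X) : Prop :=
  ∀ (Y : Type*) [TopologicalSpace Y] (opY : Y → Y → Y), IsTopSemilattice Y opY →
    ∀ f : X → Y, Topology.IsEmbedding f →
      (∀ a b, f (op a b) = opY (f a) (f b)) → IsClosed (Set.range f)

/-- 𝓐𝓗-completeness: the image under any continuous semilattice homomorphism
into a Hausdorff topological semilattice is closed. -/
def AHComplete (X : Type*) [TopologicalSpace X] (op : X → X → X) : Prop :=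
  ∀ (Y : Type*) [TopologicalSpace Y] (opY : Y → Y → Y), IsTopSemilattice Y opY →
    ∀ f : X → Y, Continuous f →
      (∀ a b, f (op a b) = opY (f a) (f b)) → IsClosed (Set.range f)

section NF

local instance nfInst : TopologicalSpace (Option ℕ) := nfTop Filter.atTop

lemma nf_isOpen_iff {U : Set (Option ℕ)} :
    IsOpen U ↔ (none ∈ U → {n : ℕ | some n ∈ U} ∈ Filter.atTop) := Iff.rfl

lemma nf_isOpen_some (n : ℕ) : IsOpen ({some n} : Set (Option ℕ)) :=
  nf_isOpen_iff.2 fun h => by simp at h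

lemma nf_isOpen_U (N : ℕ) : IsOpen ({none} ∪ some '' Set.Ici N : Set (Option ℕ)) :=
  nf_isOpen_iff.2 fun _ => Filter.mem_atTop_sets.2 ⟨N, fun b hb => Or.inr ⟨b, hb, rfl⟩⟩

lemma nf_mem_nhds_none {V : Set (Option ℕ)} (hV : V ∈ nhds (none : Option ℕ)) :
    ∃ N, ({none} ∪ some '' Set.Ici N : Set (Option ℕ)) ⊆ V := by
  obtain ⟨t, htV, hto, hnt⟩ := mem_nhds_iff.mp hV
  obtain ⟨N, hN⟩ := Filter.mem_atTop_sets.1 (nf_isOpen_iff.1 hto hnt)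
  refine ⟨N, fun x hx => htV ?_⟩
  rcases hx with hx | ⟨m, hm, rfl⟩
  · rw [Set.mem_singleton_iff] at hx; rw [hx]; exact hnt
  · exact hN m hm

lemma nf_cont : Continuous fun p : Option ℕ × Option ℕ => minOp p.1 p.2 := by
  rw [continuous_iff_continuousAt]
  rintro ⟨x, y⟩
  rw [ContinuousAt, Filter.tendsto_def]
  intro V hV
  match x, y with
  | some a, some b =>
      have hx : minOp (some a) (some b) ∈ V := mem_of_mem_nhds hV
      refine Filter.mem_of_superset
        (((nf_isOpen_some a).prod (nf_isOpen_some b)).mem_nhds ⟨rfl, rfl⟩) ?_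
      rintro ⟨u, v⟩ ⟨hu, hv⟩
      rw [Set.mem_singleton_iff] at hu hv
      subst hu; subst hv; exact hx
  | some a, none =>
      have hx : minOp (some a) none ∈ V := mem_of_mem_nhds hV
      refine Filter.mem_of_superset
        (((nf_isOpen_some a).prod (nf_isOpen_U a)).mem_nhds ⟨rfl, Or.inl rfl⟩) ?_
      rintro ⟨u, v⟩ ⟨hu, hv⟩
      rw [Set.mem_singleton_iff] at hu
      subst hu
      rcases hv with hv | ⟨m, hm, rfl⟩
      · rw [Set.mem_singleton_iff] at hv; subst hv; exact hx
      · show some (min a m) ∈ V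
        rwa [min_eq_left hm]
  | none, some b =>
      have hx : minOp none (some b) ∈ V := mem_of_mem_nhds hV
      refine Filter.mem_of_superset
        (((nf_isOpen_U b).prod (nf_isOpen_some b)).mem_nhds ⟨Or.inl rfl, rfl⟩) ?_
      rintro ⟨u, v⟩ ⟨hu, hv⟩
      rw [Set.mem_singleton_iff] at hv
      subst hv
      rcases hu with hu | ⟨m, hm, rfl⟩
      · rw [Set.mem_singleton_iff] at hu; subst hu; exact hx
      · show some (min m b) ∈ V
        rwa [min_eq_right hm]
  | none, none =>
      obtain ⟨N, hN⟩ := nf_mem_nhds_none hV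
      refine Filter.mem_of_superset
        (((nf_isOpen_U N).prod (nf_isOpen_U N)).mem_nhds ⟨Or.inl rfl, Or.inl rfl⟩) ?_
      rintro ⟨u, v⟩ ⟨hu, hv⟩
      rcases hu with hu | ⟨m, hm, rfl⟩
      · rw [Set.mem_singleton_iff] at hu; subst hu
        show v ∈ V
        exact hN hv
      · rcases hv with hv | ⟨k, hk, rfl⟩
        · rw [Set.mem_singleton_iff] at hv; subst hv
          exact hN (Or.inr ⟨m, hm, rfl⟩)
        · exact hN (Or.inr ⟨min m k, le_min (Set.mem_Ici.1 hm) (Set.mem_Ici.1 hk), rfl⟩)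

lemma nf_t2 : T2Space (Option ℕ) := by
  refine ⟨fun x y hxy => ?_⟩
  match x, y with
  | some m, some n =>
      exact ⟨{some m}, {some n}, nf_isOpen_some m, nf_isOpen_some n, rfl, rfl,
        Set.disjoint_singleton.2 hxy⟩
  | none, some n =>
      refine ⟨{none} ∪ some '' Set.Ici (n + 1), {some n}, nf_isOpen_U _, nf_isOpen_some n,
        Or.inl rfl, rfl, Set.disjoint_left.2 ?_⟩
      rintro z hz hz'
      rw [Set.mem_singleton_iff] at hz'
      subst hz'
      rcases hz with hz | ⟨m, hm, hm'⟩
      · simp at hz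
      · obtain rfl : m = n := Option.some.inj hm'
        rw [Set.mem_Ici] at hm; omega
  | some n, none =>
      refine ⟨{some n}, {none} ∪ some '' Set.Ici (n + 1), nf_isOpen_some n, nf_isOpen_U _,
        rfl, Or.inl rfl, Set.disjoint_left.2 ?_⟩
      rintro z hz hz'
      rw [Set.mem_singleton_iff] at hz
      subst hz
      rcases hz' with hz' | ⟨m, hm, hm'⟩
      · simp at hz'
      · obtain rfl : m = n := Option.some.inj hm'
        rw [Set.mem_Ici] at hm; omega
  | none, none => exact absurd rfl hxy

lemma nf_semilattice : IsTopSemilattice (Option ℕ) minOp where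
  t2 := nf_t2
  comm := by rintro (_ | a) (_ | b) <;> simp [minOp, min_comm]
  idem := by rintro (_ | a) <;> simp [minOp]
  assoc := by rintro (_ | a) (_ | b) (_ | c) <;> simp [minOp, min_assoc]
  cont := nf_cont

lemma nf_none_mem_closure : (none : Option ℕ) ∈ closure (Set.range (some : ℕ → Option ℕ)) := by
  rw [mem_closure_iff]
  intro o ho hno
  obtain ⟨N, hN⟩ := Filter.mem_atTop_sets.1 (nf_isOpen_iff.1 ho hno)
  exact ⟨some N, hN N le_rfl, N, rfl⟩

end NF

lemma nf_step1 (S : Type) [TopologicalSpace S] (op : S → S → S)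
    (hHC : HComplete S op)
    (ι : ℕ → S) (hemb : Topology.IsEmbedding ι)
    (hhom : ∀ m n : ℕ, ι (min m n) = op (ι m) (ι n))
    (hsurj : Function.Surjective ι) : False := by
  letI := nfInst
  haveI := nf_t2
  set e : ℕ ≃ S := Equiv.ofBijective ι ⟨hemb.injective, hsurj⟩ with he
  have hes : ∀ k, e.symm (ι k) = k := fun k => e.symm_apply_apply k
  have hes' : ∀ k, e.symm (e k) = k := fun k => e.symm_apply_apply k
  have hSdisc : ∀ s : S, IsOpen {s} := by
    intro s
    obtain ⟨n, rfl⟩ := hsurj s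
    have h1 : IsOpen[TopologicalSpace.induced ι ‹TopologicalSpace S›] {n} := by
      rw [← hemb.isInducing.eq_induced]; exact isOpen_discrete _
    obtain ⟨V, hV, hVn⟩ := isOpen_induced_iff.1 h1
    have hVeq : V = {ι n} := by
      ext x
      constructor
      · intro hx
        obtain ⟨m, rfl⟩ := hsurj x
        have hm : m ∈ ι ⁻¹' V := hx
        rw [hVn, Set.mem_singleton_iff] at hm
        rw [Set.mem_singleton_iff, hm]
      · intro hx
        rw [Set.mem_singleton_iff] at hx
        subst hx
        have h2 : n ∈ ι ⁻¹' V := by rw [hVn]; rfl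
        exact h2
    rw [← hVeq]; exact hV
  set opY : ULift (Option ℕ) → ULift (Option ℕ) → ULift (Option ℕ) :=
    fun x y => ULift.up (minOp x.down y.down) with hopY
  have hY : IsTopSemilattice (ULift (Option ℕ)) opY :=
    { t2 := inferInstance
      comm := fun a b => congrArg ULift.up (nf_semilattice.comm a.down b.down)
      idem := fun a => congrArg ULift.up (nf_semilattice.idem a.down)
      assoc := fun a b c => congrArg ULift.up (nf_semilattice.assoc a.down b.down c.down)
      cont := continuous_uliftUp.comp (nf_cont.comp
        ((continuous_uliftDown.comp continuous_fst).prodMk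
          (continuous_uliftDown.comp continuous_snd))) }
  set f : S → ULift (Option ℕ) := fun s => ULift.up (some (e.symm s)) with hf
  have hindopen : ∀ s : S, IsOpen[TopologicalSpace.induced f ULift.topologicalSpace] {s} := by
    intro s
    refine isOpen_induced_iff.2 ⟨ULift.down ⁻¹' {some (e.symm s)},
      (nf_isOpen_some _).preimage continuous_uliftDown, ?_⟩
    ext x
    simp only [Set.mem_preimage, Set.mem_singleton_iff, hf, Option.some.injEq]
    exact ⟨fun h => e.symm.injective h, fun h => by rw [h]⟩
  have hind : Topology.IsInducing f := by
    constructor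
    rw [eq_bot_of_singletons_open hSdisc, eq_bot_of_singletons_open hindopen]
  have hhomf : ∀ a b : S, f (op a b) = opY (f a) (f b) := by
    intro a b
    obtain ⟨m, rfl⟩ := hsurj a
    obtain ⟨n, rfl⟩ := hsurj b
    show ULift.up (some (e.symm (op (ι m) (ι n))))
      = opY (ULift.up (some (e.symm (ι m)))) (ULift.up (some (e.symm (ι n))))
    rw [← hhom, hes, hes, hes]
    rfl
  have hclosed := hHC (ULift (Option ℕ)) opY hY f
    ⟨hind, fun a b h => e.symm.injective (Option.some.inj (congrArg ULift.down h))⟩ hhomf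
  have hmem : ULift.up (none : Option ℕ) ∈ closure (Set.range f) := by
    rw [mem_closure_iff]
    intro o ho hno
    rw [ULift.isOpen_iff] at ho
    have hnone : none ∈ ULift.up ⁻¹' o := hno
    obtain ⟨N, hN⟩ := Filter.mem_atTop_sets.1 (nf_isOpen_iff.1 ho hnone)
    refine ⟨f (e N), ?_, ⟨e N, rfl⟩⟩
    have hNo : some N ∈ ULift.up ⁻¹' o := hN N le_rfl
    show ULift.up (some (e.symm (e N))) ∈ o
    rw [hes']
    exact hNo
  rw [hclosed.closure_eq] at hmem
  obtain ⟨s, hs⟩ := hmem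
  simp [hf] at hs

/-- if S is an 𝓗-complete Hausdorff topological semilattice containing the
discrete semilattice (ℕ, min) as a dense subsemilattice, then S \ ℕ is a singleton {a}
with a·a = a and a·n = n for all n ∈ ℕ. -/
theorem hCompletion_min_complement_singleton (S : Type) [TopologicalSpace S] (op : S → S → S)
    (hS : IsTopSemilattice S op) (hHC : HComplete S op)
    (ι : ℕ → S) (hemb : Topology.IsEmbedding ι)
    (hhom : ∀ m n : ℕ, ι (min m n) = op (ι m) (ι n))
    (hdense : DenseRange ι) :
    ∃ a : S, (Set.range ι)ᶜ = {a} ∧ op a a = a ∧ ∀ n : ℕ, op a (ι n) = ι n := by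
  haveI := hS.t2
  have hne : ∃ a : S, a ∉ Set.range ι := by
    by_contra h
    push_neg at h
    exact nf_step1 S op hHC ι hemb hhom fun s => h s
  obtain ⟨a, ha⟩ := hne
  have key : ∀ b : S, b ∉ Set.range ι → ∀ x : S, op b x = x := by
    intro b hb
    have hn : ∀ n : ℕ, op b (ι n) = ι n := by
      intro n
      have hcl : b ∈ closure (ι '' Set.Ici n) := by
        have h1 : b ∈ closure (Set.range ι) := by
          rw [hdense.closure_range]; trivial
        have h2 : Set.range ι = ι '' Set.Iio n ∪ ι '' Set.Ici n := by
          rw [← Set.image_union, Set.Iio_union_Ici, Set.image_univ]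
        rw [h2, closure_union] at h1
        rcases h1 with h1 | h1
        · exfalso
          rw [((Set.finite_Iio n).image ι).isClosed.closure_eq] at h1
          obtain ⟨m, _, rfl⟩ := h1
          exact hb ⟨m, rfl⟩
        · exact h1
      have hcont : Continuous fun x : S => op x (ι n) :=
        hS.cont.comp (continuous_id.prodMk continuous_const)
      have h3 : op b (ι n) ∈ closure ((fun x => op x (ι n)) '' (ι '' Set.Ici n)) :=
        image_closure_subset_closure_image hcont ⟨b, hcl, rfl⟩
      have h4 : (fun x : S => op x (ι n)) '' (ι '' Set.Ici n) ⊆ {ι n} := by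
        rintro _ ⟨_, ⟨m, hm, rfl⟩, rfl⟩
        show op (ι m) (ι n) ∈ {ι n}
        rw [Set.mem_singleton_iff, ← hhom, min_eq_right (Set.mem_Ici.1 hm)]
      have h5 := closure_mono h4 h3
      rwa [closure_singleton, Set.mem_singleton_iff] at h5
    have heq : (fun x : S => op b x) = id := by
      refine hdense.equalizer (hS.cont.comp (continuous_const.prodMk continuous_id))
        continuous_id ?_
      funext n
      exact hn n
    exact fun x => congrFun heq x
  refine ⟨a, ?_, hS.idem a, fun n => key a ha (ι n)⟩
  ext b
  simp only [Set.mem_compl_iff, Set.mem_singleton_iff]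
  constructor
  · intro hb
    calc b = op a b := (key a ha b).symm
    _ = op b a := hS.comm a b
    _ = a := key b hb a
  · rintro rfl; exact ha
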